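/- arXiv:2508.08807 — 3 statements merged into one kernel-verified Lean document; each statement's English description precedes it below -/
import Mathlib

section
/- Let P = D_v^{-1} Hᵀ W D_e^{-1} H with H, W, D_e, D_v as above, let α ∈ [0,1), and define Π^(t) via Π^(0) = I_n, Π^(t+1) = α I_n + (1−α) Π^(t) P. Then for every natural number t, the matrix Π^(t) D_v^{-1} is symmetric. -/
open Matrix

theorem rwr_mul_inv_degree_isSymm
    (m n : ℕ) (H : Matrix (Fin (m + n)) (Fin n) ℝ)
    (w de : Fin (m + n) → ℝ) (dv : Fin n → ℝ)
    (hw : ∀ i, 0 < w i) (hde : ∀ i, 0 < de i) (hdv : ∀ j, 0 < dv j)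
    (P : Matrix (Fin n) (Fin n) ℝ)
    (hP : P = diagonal (fun j => (dv j)⁻¹) * Hᵀ * diagonal w *
        diagonal (fun i => (de i)⁻¹) * H)
    (α : ℝ) (hα : 0 ≤ α) (hα1 : α < 1)
    (Pi : ℕ → Matrix (Fin n) (Fin n) ℝ)
    (h0 : Pi 0 = 1)
    (hrec : ∀ t, Pi (t + 1) = α • (1 : Matrix (Fin n) (Fin n) ℝ) + (1 - α) • (Pi t * P)) :
    ∀ t : ℕ, (Pi t * diagonal (fun j => (dv j)⁻¹)).IsSymm := by
  set Dvi : Matrix (Fin n) (Fin n) ℝ := diagonal (fun j => (dv j)⁻¹) with hDvi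
  set S : Matrix (Fin n) (Fin n) ℝ :=
    Hᵀ * diagonal w * diagonal (fun i => (de i)⁻¹) * H with hS
  have hDviT : Dviᵀ = Dvi := diagonal_transpose _
  have hfun : (fun i => (de i)⁻¹ * w i) = fun i => w i * (de i)⁻¹ :=
    funext fun i => mul_comm _ _
  have hSsymm : Sᵀ = S := by
    simp [hS, transpose_mul, Matrix.mul_assoc, hfun]
  have hP' : P = Dvi * S := by
    rw [hP, hS]; simp only [Matrix.mul_assoc]
  have hPDviSymm : (P * Dvi)ᵀ = P * Dvi := by
    rw [hP', transpose_mul, transpose_mul, hDviT, hSsymm, ← Matrix.mul_assoc]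
  have hDviPt : Dvi * Pᵀ = P * Dvi := by
    calc Dvi * Pᵀ = Dviᵀ * Pᵀ := by rw [hDviT]
      _ = (P * Dvi)ᵀ := (transpose_mul _ _).symm
      _ = P * Dvi := hPDviSymm
  have hcommP : ∀ t, Pi t * P = P * Pi t := by
    intro t
    induction t with
    | zero => rw [h0, Matrix.one_mul, Matrix.mul_one]
    | succ t ih =>
      rw [hrec t, Matrix.add_mul, Matrix.mul_add, smul_mul_assoc, mul_smul_comm,
        smul_mul_assoc, mul_smul_comm, Matrix.one_mul, Matrix.mul_one,
        ih, Matrix.mul_assoc, ih]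
  intro t
  induction t with
  | zero => rw [h0, Matrix.one_mul]; exact hDviT
  | succ t ih =>
    have ih' : (Pi t * Dvi)ᵀ = Pi t * Dvi := ih
    show (Pi (t + 1) * Dvi)ᵀ = Pi (t + 1) * Dvi
    have key : (Pi t * P * Dvi)ᵀ = Pi t * P * Dvi := by
      calc (Pi t * P * Dvi)ᵀ = (P * (Pi t * Dvi))ᵀ := by
            rw [← Matrix.mul_assoc, ← hcommP t, Matrix.mul_assoc]
        _ = (Pi t * Dvi)ᵀ * Pᵀ := transpose_mul _ _
        _ = Pi t * Dvi * Pᵀ := by rw [ih']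
        _ = Pi t * (Dvi * Pᵀ) := Matrix.mul_assoc _ _ _
        _ = Pi t * (P * Dvi) := by rw [hDviPt]
        _ = Pi t * P * Dvi := (Matrix.mul_assoc _ _ _).symm
    rw [hrec t, Matrix.add_mul, smul_mul_assoc, smul_mul_assoc, Matrix.one_mul,
      transpose_add, transpose_smul, transpose_smul, hDviT, key]
end

section
/- Let P = D_v^{-1} Hᵀ W D_e^{-1} H, α ∈ [0,1), and suppose the limit Π = Σ_{i=0}^∞ α(1−α)^i P^i exists (e.g., as the limit of partial sums, which converge since P is row-stochastic). Then Π D_v^{-1} is symmetric; equivalently, for all i, j: π(v_i,v_j)/d(v_j) = π(v_j,v_i)/d(v_i), where π(v_i,v_j) = Π[i,j] and d(v_k) = D_v[k,k]. -/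
open Matrix Filter

theorem rwr_limit_mul_inv_degree_isSymm
    (m n : ℕ) (H : Matrix (Fin (m + n)) (Fin n) ℝ)
    (w de : Fin (m + n) → ℝ) (dv : Fin n → ℝ)
    (hw : ∀ i, 0 < w i) (hde : ∀ i, 0 < de i) (hdv : ∀ j, 0 < dv j)
    (P : Matrix (Fin n) (Fin n) ℝ)
    (hP : P = diagonal (fun j => (dv j)⁻¹) * Hᵀ * diagonal w *
        diagonal (fun i => (de i)⁻¹) * H)
    (α : ℝ) (hα : 0 ≤ α) (hα1 : α < 1)
    (Pl : Matrix (Fin n) (Fin n) ℝ)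
    (hlim : ∀ i j, Tendsto
      (fun T : ℕ => ∑ k ∈ Finset.range T, α * (1 - α) ^ k * (P ^ k) i j)
      atTop (nhds (Pl i j))) :
    (Pl * diagonal (fun j => (dv j)⁻¹)).IsSymm ∧
      ∀ i j : Fin n, Pl i j / dv j = Pl j i / dv i := by
  set Q : Matrix (Fin n) (Fin n) ℝ := diagonal (fun j => (dv j)⁻¹) with hQ
  set S : Matrix (Fin n) (Fin n) ℝ :=
    Hᵀ * diagonal w * diagonal (fun i => (de i)⁻¹) * H with hS
  have hSsymm : Sᵀ = S := by
    simp [hS, Matrix.transpose_mul, Matrix.mul_assoc, Matrix.diagonal_transpose]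
  have hQsymm : Qᵀ = Q := by simp [hQ]
  have hPQS : P = Q * S := by rw [hP, hQ, hS]; simp [Matrix.mul_assoc]
  -- key: (P^k * Q) is symmetric
  have hkey : ∀ k : ℕ, (P ^ k * Q)ᵀ = P ^ k * Q := by
    intro k
    induction k with
    | zero => simp [hQsymm]
    | succ k ih =>
      have h1 : P ^ (k + 1) * Q = (P ^ k * Q) * (S * Q) := by
        rw [pow_succ, hPQS]; simp [Matrix.mul_assoc]
      rw [h1, Matrix.transpose_mul, Matrix.transpose_mul, hSsymm, hQsymm, ih]
      rw [← Matrix.mul_assoc, ← hPQS, ← pow_succ', h1]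
  have hentry : ∀ (k : ℕ) (i j : Fin n),
      (P ^ k) i j * (dv j)⁻¹ = (P ^ k) j i * (dv i)⁻¹ := by
    intro k i j
    have := congrFun (congrFun (hkey k) i) j
    simpa [hQ, Matrix.mul_diagonal, Matrix.transpose_apply] using this.symm
  have hmain : ∀ i j : Fin n, Pl i j * (dv j)⁻¹ = Pl j i * (dv i)⁻¹ := by
    intro i j
    have h1 : Tendsto
        (fun T : ℕ => (∑ k ∈ Finset.range T, α * (1 - α) ^ k * (P ^ k) i j) * (dv j)⁻¹)
        atTop (nhds (Pl i j * (dv j)⁻¹)) := (hlim i j).mul_const _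
    have h2 : Tendsto
        (fun T : ℕ => (∑ k ∈ Finset.range T, α * (1 - α) ^ k * (P ^ k) j i) * (dv i)⁻¹)
        atTop (nhds (Pl j i * (dv i)⁻¹)) := (hlim j i).mul_const _
    have heq : (fun T : ℕ => (∑ k ∈ Finset.range T, α * (1 - α) ^ k * (P ^ k) i j) * (dv j)⁻¹)
        = fun T : ℕ => (∑ k ∈ Finset.range T, α * (1 - α) ^ k * (P ^ k) j i) * (dv i)⁻¹ := by
      funext T
      rw [Finset.sum_mul, Finset.sum_mul]
      refine Finset.sum_congr rfl fun k _ => ?_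
      rw [mul_assoc, mul_assoc, hentry k i j, ← mul_assoc, ← mul_assoc]
    rw [heq] at h1
    exact tendsto_nhds_unique h1 h2
  constructor
  · ext i j
    simp only [Matrix.transpose_apply, hQ, Matrix.mul_diagonal]
    exact hmain j i
  · intro i j
    rw [div_eq_mul_inv, div_eq_mul_inv]
    exact hmain i j
end

section
/- Low-rank approximation guarantee (Theorem 1, node case): Let H̃ = UΣVᵀ be a reduced SVD as above with singular values σ_1 ≥ … ≥ σ_n, let Σ̂ be the diagonal matrix with entries f(σ_j) where f(σ) = Σ_{i=0}^{T−1} α(1−α)^i σ^{2i} + (1−α)^T σ^{2T}, and vol > 0 a positive scalar. Define F = √vol · D_v^{-1/2} V Σ̂^{1/2} and F_r = √vol · D_v^{-1/2} V_r Σ̂_r^{1/2}, where V_r consists of the first r columns of V and Σ̂_r the corresponding r×r diagonal block. Then ‖tlog°(F_r F_rᵀ) − tlog°(F Fᵀ)‖_F² ≤ [ ‖D_v^{1/2}‖_F² ‖D_v^{-1/2}‖_F² Σ_{i=r+1}^{n} Σ̂[i,i] ]², where vol = ‖D_v^{1/2}‖_F². -/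
open Matrix

noncomputable def tlog (x : ℝ) : ℝ := Real.log (max x 1)

noncomputable def frobNorm {a b : Type*} [Fintype a] [Fintype b]
    (M : Matrix a b ℝ) : ℝ := Real.sqrt (∑ i, ∑ j, (M i j) ^ 2)

lemma tlog_lipschitz (x y : ℝ) : |tlog x - tlog y| ≤ |x - y| := by
  have key : ∀ a b : ℝ, 1 ≤ a → a ≤ b → Real.log b - Real.log a ≤ b - a := by
    intro a b ha hab
    have ha0 : 0 < a := by linarith
    have hb0 : 0 < b := by linarith
    rw [← Real.log_div (ne_of_gt hb0) (ne_of_gt ha0)]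
    have h1 : Real.log (b / a) ≤ b / a - 1 :=
      Real.log_le_sub_one_of_pos (by positivity)
    have h2 : b / a - 1 ≤ b - a := by
      rw [div_sub_one (ne_of_gt ha0), div_le_iff₀ ha0]
      nlinarith
    linarith
  have step1 : |tlog x - tlog y| ≤ |max x 1 - max y 1| := by
    unfold tlog
    rcases le_total (max x 1) (max y 1) with h | h
    · rw [abs_sub_comm, abs_of_nonneg (by
        have := Real.log_le_log (by positivity) h
        linarith), abs_sub_comm, abs_of_nonneg (by linarith)]
      exact key _ _ (le_max_right _ _) h
    · rw [abs_of_nonneg (by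
        have := Real.log_le_log (by positivity) h
        linarith), abs_of_nonneg (by linarith)]
      exact key _ _ (le_max_right _ _) h
  exact step1.trans (abs_max_sub_max_le_abs x y 1)

theorem low_rank_approximation_guarantee_node
    (n r T : ℕ) (hr : r ≤ n)
    (α : ℝ) (hα : 0 ≤ α) (hα1 : α < 1)
    (dv : Fin n → ℝ) (hdv : ∀ j, 0 < dv j)
    (V : Matrix (Fin n) (Fin n) ℝ) (hV : Vᵀ * V = 1) (hV' : V * Vᵀ = 1)
    (σ : Fin n → ℝ) (hσ : ∀ j, 0 ≤ σ j) (hσa : Antitone σ)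
    (f : ℝ → ℝ)
    (hf : f = fun x => (∑ i ∈ Finset.range T, α * (1 - α) ^ i * x ^ (2 * i)) +
      (1 - α) ^ T * x ^ (2 * T))
    (vol : ℝ) (hvol : vol = ∑ i, dv i)
    (F : Matrix (Fin n) (Fin n) ℝ)
    (hF : F = Real.sqrt vol • (diagonal (fun j => (Real.sqrt (dv j))⁻¹) * V *
      diagonal (fun j => Real.sqrt (f (σ j)))))
    (Fr : Matrix (Fin n) (Fin r) ℝ)
    (hFr : Fr = Real.sqrt vol • (diagonal (fun j => (Real.sqrt (dv j))⁻¹) *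
      (of fun (i : Fin n) (j : Fin r) => V i (Fin.castLE hr j)) *
      diagonal (fun j : Fin r => Real.sqrt (f (σ (Fin.castLE hr j)))))) :
    frobNorm ((Fr * Frᵀ).map tlog - (F * Fᵀ).map tlog) ^ 2 ≤
      (frobNorm (diagonal (fun j => Real.sqrt (dv j))) ^ 2 *
        frobNorm (diagonal (fun j => (Real.sqrt (dv j))⁻¹)) ^ 2 *
        ∑ i ∈ Finset.univ.filter (fun i : Fin n => r ≤ (i : ℕ)), f (σ i)) ^ 2 := by
  -- basic facts
  have hfnn : ∀ x : ℝ, 0 ≤ f x := by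
    intro x
    rw [hf]
    have h1 : (0:ℝ) ≤ 1 - α := by linarith
    apply add_nonneg
    · apply Finset.sum_nonneg
      intro i _
      rw [pow_mul]
      positivity
    · rw [pow_mul]
      positivity
  have hvol0 : 0 ≤ vol := by
    rw [hvol]; exact Finset.sum_nonneg fun i _ => (hdv i).le
  set c : Fin n → ℝ := fun j => (Real.sqrt (dv j))⁻¹ with hc
  have hcnn : ∀ j, 0 ≤ c j := fun j => by positivity
  set S : ℝ := ∑ i ∈ Finset.univ.filter (fun i : Fin n => r ≤ (i : ℕ)), f (σ i) with hS
  have hSnn : 0 ≤ S := Finset.sum_nonneg fun i _ => hfnn _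
  -- |V a k| ≤ 1
  have hVbd : ∀ a k, |V a k| ≤ 1 := by
    intro a k
    have h := congrFun (congrFun hV' a) a
    rw [Matrix.mul_apply] at h
    simp only [Matrix.transpose_apply, Matrix.one_apply_eq] at h
    rw [abs_le_one_iff_mul_self_le_one]
    calc V a k * V a k ≤ ∑ j, V a j * V a j :=
          Finset.single_le_sum (f := fun j => V a j * V a j)
            (fun j _ => mul_self_nonneg _) (Finset.mem_univ k)
      _ = 1 := h
  -- entry formulas
  have hFab : ∀ a b, (F * Fᵀ) a b =
      vol * (c a * c b * ∑ k, V a k * V b k * f (σ k)) := by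
    intro a b
    rw [hF, Matrix.mul_apply]
    simp only [Finset.mul_sum]
    apply Finset.sum_congr rfl
    intro k _
    simp only [Matrix.transpose_apply, Matrix.smul_apply, smul_eq_mul,
      Matrix.mul_diagonal, Matrix.diagonal_mul]
    have h1 : Real.sqrt vol * Real.sqrt vol = vol := Real.mul_self_sqrt hvol0
    have h2 : Real.sqrt (f (σ k)) * Real.sqrt (f (σ k)) = f (σ k) :=
      Real.mul_self_sqrt (hfnn _)
    linear_combination (c a * c b * V a k * V b k *
        (Real.sqrt (f (σ k)) * Real.sqrt (f (σ k)))) * h1 +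
      vol * (c a * c b * (V a k * V b k)) * h2
  have hFrab : ∀ a b, (Fr * Frᵀ) a b =
      vol * (c a * c b * ∑ k : Fin r,
        V a (Fin.castLE hr k) * V b (Fin.castLE hr k) * f (σ (Fin.castLE hr k))) := by
    intro a b
    rw [hFr, Matrix.mul_apply]
    simp only [Finset.mul_sum]
    apply Finset.sum_congr rfl
    intro k _
    simp only [Matrix.transpose_apply, Matrix.smul_apply, smul_eq_mul,
      Matrix.mul_diagonal, Matrix.diagonal_mul, Matrix.of_apply]
    have h1 : Real.sqrt vol * Real.sqrt vol = vol := Real.mul_self_sqrt hvol0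
    have h2 : Real.sqrt (f (σ (Fin.castLE hr k))) * Real.sqrt (f (σ (Fin.castLE hr k))) =
        f (σ (Fin.castLE hr k)) := Real.mul_self_sqrt (hfnn _)
    linear_combination (c a * c b * V a (Fin.castLE hr k) * V b (Fin.castLE hr k) *
        (Real.sqrt (f (σ (Fin.castLE hr k))) * Real.sqrt (f (σ (Fin.castLE hr k))))) * h1 +
      vol * (c a * c b * (V a (Fin.castLE hr k) * V b (Fin.castLE hr k))) * h2
  -- head sum reindexing
  have hmapset : Finset.univ.map (Fin.castLEEmb hr) =
      Finset.univ.filter (fun k : Fin n => (k : ℕ) < r) := by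
    ext k
    simp only [Finset.mem_map, Finset.mem_univ, true_and, Finset.mem_filter]
    constructor
    · rintro ⟨j, rfl⟩
      exact j.isLt
    · intro h
      exact ⟨⟨(k : ℕ), h⟩, by ext; simp [Fin.castLEEmb]⟩
  have hhead : ∀ a b, (∑ k : Fin r,
      V a (Fin.castLE hr k) * V b (Fin.castLE hr k) * f (σ (Fin.castLE hr k))) =
      ∑ k ∈ Finset.univ.filter (fun k : Fin n => (k : ℕ) < r),
        V a k * V b k * f (σ k) := by
    intro a b
    rw [← hmapset, Finset.sum_map]
    rfl
  -- per-entry bound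
  have hent : ∀ a b, |tlog ((Fr * Frᵀ) a b) - tlog ((F * Fᵀ) a b)| ≤
      vol * (c a * c b * S) := by
    intro a b
    refine (tlog_lipschitz _ _).trans ?_
    rw [hFab, hFrab, hhead]
    have hsplit : (∑ k, V a k * V b k * f (σ k)) =
        (∑ k ∈ Finset.univ.filter (fun k : Fin n => (k : ℕ) < r),
          V a k * V b k * f (σ k)) +
        (∑ k ∈ Finset.univ.filter (fun k : Fin n => r ≤ (k : ℕ)),
          V a k * V b k * f (σ k)) := by
      rw [← Finset.sum_filter_add_sum_filter_not Finset.univ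
        (fun k : Fin n => (k : ℕ) < r) (fun k => V a k * V b k * f (σ k))]
      congr 1
      apply Finset.sum_congr _ (fun _ _ => rfl)
      apply Finset.filter_congr
      intro x _
      simp [not_lt]
    rw [hsplit]
    have heq : vol * (c a * c b *
        (∑ k ∈ Finset.univ.filter (fun k : Fin n => (k : ℕ) < r),
          V a k * V b k * f (σ k))) -
      vol * (c a * c b *
        ((∑ k ∈ Finset.univ.filter (fun k : Fin n => (k : ℕ) < r),
          V a k * V b k * f (σ k)) +
         (∑ k ∈ Finset.univ.filter (fun k : Fin n => r ≤ (k : ℕ)),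
          V a k * V b k * f (σ k)))) =
      -(vol * (c a * c b *
        (∑ k ∈ Finset.univ.filter (fun k : Fin n => r ≤ (k : ℕ)),
          V a k * V b k * f (σ k)))) := by ring
    rw [heq, abs_neg]
    simp only [abs_mul]
    rw [abs_of_nonneg hvol0, abs_of_nonneg (hcnn a), abs_of_nonneg (hcnn b)]
    have htb : |∑ k ∈ Finset.univ.filter (fun k : Fin n => r ≤ (k : ℕ)),
        V a k * V b k * f (σ k)| ≤ S := by
      refine (Finset.abs_sum_le_sum_abs _ _).trans ?_
      rw [hS]
      apply Finset.sum_le_sum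
      intro k _
      rw [abs_mul, abs_mul, abs_of_nonneg (hfnn _)]
      calc |V a k| * |V b k| * f (σ k) ≤ 1 * 1 * f (σ k) := by
            apply mul_le_mul_of_nonneg_right _ (hfnn _)
            exact mul_le_mul (hVbd a k) (hVbd b k) (abs_nonneg _) zero_le_one
        _ = f (σ k) := by ring
    have hfin : vol * (c a * c b * |∑ k ∈ Finset.univ.filter
        (fun k : Fin n => r ≤ (k : ℕ)), V a k * V b k * f (σ k)|) ≤
        vol * (c a * c b * S) := by
      apply mul_le_mul_of_nonneg_left _ hvol0
      exact mul_le_mul_of_nonneg_left htb (mul_nonneg (hcnn a) (hcnn b))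
    exact hfin
  -- frobenius norm squared
  have hsq : ∀ (M : Matrix (Fin n) (Fin n) ℝ),
      frobNorm M ^ 2 = ∑ i, ∑ j, M i j ^ 2 := by
    intro M
    rw [frobNorm, Real.sq_sqrt]
    positivity
  have hdiagsq : ∀ (d : Fin n → ℝ),
      frobNorm (diagonal d) ^ 2 = ∑ i, d i ^ 2 := by
    intro d
    rw [hsq]
    apply Finset.sum_congr rfl
    intro i _
    rw [Finset.sum_eq_single i]
    · simp [Matrix.diagonal_apply_eq]
    · intro j _ hj
      rw [Matrix.diagonal_apply_ne' _ hj]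
      ring
    · simp
  have hvol' : frobNorm (diagonal (fun j => Real.sqrt (dv j))) ^ 2 = vol := by
    rw [hdiagsq, hvol]
    apply Finset.sum_congr rfl
    intro i _
    exact Real.sq_sqrt (hdv i).le
  set s : ℝ := ∑ i, c i ^ 2 with hs
  have hs' : frobNorm (diagonal (fun j => (Real.sqrt (dv j))⁻¹)) ^ 2 = s := hdiagsq c
  rw [hvol', hs', hsq]
  have hbound : ∀ a b : Fin n,
      ((Fr * Frᵀ).map tlog - (F * Fᵀ).map tlog) a b ^ 2 ≤
        (vol * (c a * c b * S)) ^ 2 := by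
    intro a b
    have h1 : ((Fr * Frᵀ).map tlog - (F * Fᵀ).map tlog) a b =
        tlog ((Fr * Frᵀ) a b) - tlog ((F * Fᵀ) a b) := by
      simp [Matrix.sub_apply, Matrix.map_apply]
    rw [h1, ← sq_abs]
    have h2 := hent a b
    have h3 : (0:ℝ) ≤ |tlog ((Fr * Frᵀ) a b) - tlog ((F * Fᵀ) a b)| := abs_nonneg _
    nlinarith [h2, h3]
  calc ∑ a, ∑ b, ((Fr * Frᵀ).map tlog - (F * Fᵀ).map tlog) a b ^ 2 ≤
        ∑ a : Fin n, ∑ b : Fin n, (vol * (c a * c b * S)) ^ 2 := by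
          apply Finset.sum_le_sum
          intro a _
          exact Finset.sum_le_sum fun b _ => hbound a b
    _ = ∑ a : Fin n, ∑ b : Fin n, (vol ^ 2 * S ^ 2) * (c a ^ 2 * c b ^ 2) := by
          apply Finset.sum_congr rfl
          intro a _
          apply Finset.sum_congr rfl
          intro b _
          ring
    _ = (vol ^ 2 * S ^ 2) * ((∑ a, c a ^ 2) * (∑ b, c b ^ 2)) := by
          rw [Finset.sum_mul_sum, Finset.mul_sum]
          apply Finset.sum_congr rfl
          intro a _
          rw [Finset.mul_sum]
    _ = (vol * s * S) ^ 2 := by rw [← hs]; ring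
end
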